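/- Let q be an odd prime power, let 𝔽̄_q be an algebraic closure of 𝔽_q, and let r ≥ 1 be an integer. Then the number of elements x ∈ 𝔽̄_q^× with x² ≠ 1, x^{q^r} = x^{−1}, and x^{q^s} ≠ x^{−1} for every integer 1 ≤ s < r, equals Σ_{s | r, r/s odd} μ(r/s)(q^s − 1), where μ is the Möbius function and 'r/s odd' means the integer r/s is odd. -/

import Mathlib

private lemma keyNT {q d s : ℕ} (hd : ¬ d ∣ 2) (hs : 1 ≤ s) (hds : d ∣ q ^ s + 1)
    (hmin : ∀ u, 1 ≤ u → u < s → ¬ d ∣ q ^ u + 1) {t : ℕ} (ht : 1 ≤ t) :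
    d ∣ q ^ t + 1 ↔ s ∣ t ∧ Odd (t / s) := by
  have hd0 : d ≠ 0 := by rintro rfl; exact (by simp at hds : False)
  have hd1 : d ≠ 1 := by rintro rfl; exact hd (one_dvd _)
  have hd2' : d ≠ 2 := by rintro rfl; exact hd dvd_rfl
  have hd3 : 2 < d := by omega
  haveI : Fact (2 < d) := ⟨hd3⟩
  have hne : (-1 : ZMod d) ≠ 1 := ZMod.neg_one_ne_one
  have hdvd : ∀ u : ℕ, d ∣ q ^ u + 1 ↔ (q : ZMod d) ^ u = -1 := by
    intro u
    rw [← ZMod.natCast_eq_zero_iff]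
    push_cast
    constructor
    · intro h; linear_combination h
    · intro h; linear_combination h
  have hQs : (q : ZMod d) ^ s = -1 := (hdvd s).mp hds
  have h2s : (q : ZMod d) ^ (s * 2) = 1 := by rw [pow_mul, hQs, neg_one_sq]
  set Q : ZMod d := (q : ZMod d) with hQ
  have hfin : IsOfFinOrder Q := isOfFinOrder_iff_pow_eq_one.mpr ⟨s*2, by omega, h2s⟩
  set e := orderOf Q with he
  have hepos : 0 < e := hfin.orderOf_pos
  have he2s : e ∣ s * 2 := orderOf_dvd_of_pow_eq_one h2s
  have hes : ¬ e ∣ s := by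
    intro h
    have : Q ^ s = 1 := orderOf_dvd_iff_pow_eq_one.mp h
    exact hne (by rw [← hQs, this])
  have hse : s < e := by
    by_contra hle
    have helt : e < s := lt_of_le_of_ne (not_lt.mp (by omega)) (fun h => hes (h ▸ dvd_rfl))
    have h1 : Q ^ (s - e + e) = -1 := by rw [Nat.sub_add_cancel helt.le]; exact hQs
    have h2 : Q ^ (s - e) = -1 := by
      rw [pow_add, pow_orderOf_eq_one, mul_one] at h1; exact h1
    exact hmin (s - e) (by omega) (by omega) ((hdvd _).mpr h2)
  have he2 : e = s * 2 := by
    obtain ⟨k, hk⟩ := he2s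
    rcases Nat.lt_or_ge k 2 with hk2 | hk2
    · interval_cases k <;> omega
    · nlinarith
  constructor
  · intro hdt
    have hQt : Q ^ t = -1 := (hdvd t).mp hdt
    have hst : s ≤ t := by
      by_contra hlt
      exact hmin t ht (by omega) hdt
    have hts : Q ^ (t - s) = 1 := by
      have h1 : Q ^ (t - s) * Q ^ s = -1 := by
        rw [← pow_add, Nat.sub_add_cancel hst]; exact hQt
      have := congrArg (· * Q ^ s) h1
      simp only [mul_assoc, ← sq, hQs, neg_one_sq, mul_one] at this
      simpa [hQs] using this
    have : e ∣ t - s := orderOf_dvd_of_pow_eq_one hts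
    obtain ⟨k, hk⟩ := this
    rw [he2] at hk
    have h3 : t = s * 2 * k + s := (Nat.sub_eq_iff_eq_add hst).mp hk
    have htk : t = s * (2 * k + 1) := by rw [h3]; ring
    refine ⟨⟨2 * k + 1, htk⟩, ?_⟩
    rw [htk, Nat.mul_div_cancel_left _ hs]
    exact ⟨k, by omega⟩
  · rintro ⟨hst, hodd⟩
    have ht' : t = s * (t / s) := (Nat.mul_div_cancel' hst).symm
    have : Q ^ t = -1 := by
      rw [ht', pow_mul, hQs]
      exact hodd.neg_one_pow
    exact (hdvd t).mpr this

private lemma Dodd {a m : ℕ} (hm : Odd m) (hm0 : 0 < m) :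
    (Nat.divisors (2 ^ a * m)).filter (fun s => Odd ((2 ^ a * m) / s)) =
      m.divisors.image (fun t => 2 ^ a * t) := by
  ext s
  simp only [Finset.mem_filter, Nat.mem_divisors, Finset.mem_image]
  constructor
  · rintro ⟨⟨hdvd, hne⟩, hodd⟩
    have hk : s * ((2 ^ a * m) / s) = 2 ^ a * m := Nat.mul_div_cancel' hdvd
    have hcop : Nat.Coprime (2 ^ a) ((2 ^ a * m) / s) :=
      Nat.Coprime.pow_left _ (Nat.coprime_two_left.mpr hodd)
    have h2a : 2 ^ a ∣ s := hcop.dvd_of_dvd_mul_right (by rw [hk]; exact Dvd.intro m rfl)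
    obtain ⟨t, rfl⟩ := h2a
    refine ⟨t, ⟨?_, by omega⟩, rfl⟩
    exact (mul_dvd_mul_iff_left (pow_ne_zero a (two_ne_zero))).mp hdvd
  · rintro ⟨t, ⟨htm, hm0'⟩, rfl⟩
    have ht0 : 0 < t := Nat.pos_of_dvd_of_pos htm hm0
    have h2a0 : 0 < 2 ^ a := Nat.pow_pos (by norm_num)
    refine ⟨⟨mul_dvd_mul_left _ htm, by positivity⟩, ?_⟩
    rw [Nat.mul_div_mul_left _ _ h2a0]
    rcases Nat.even_or_odd (m / t) with hev | hod
    · exfalso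
      have : 2 ∣ m := dvd_trans hev.two_dvd (Nat.div_dvd_of_dvd htm)
      exact (Nat.not_even_iff_odd.mpr hm) (even_iff_two_dvd.mpr this)
    · exact hod

private noncomputable def Aset (F : Type) [CommRing F] [IsDomain F] (q t : ℕ) : Finset F :=
  Polynomial.nthRootsFinset (q ^ t + 1) (1 : F)

open Classical in
private noncomputable def Sset (F : Type) [CommRing F] [IsDomain F] (q t : ℕ) : Finset F :=
  (Aset F q t).filter (fun x => x ^ 2 ≠ 1 ∧ ∀ u, 1 ≤ u → u < t → x ∉ Aset F q u)

private lemma mem_Aset {F : Type} [CommRing F] [IsDomain F] {q t : ℕ} {x : F} :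
    x ∈ Aset F q t ↔ x ^ (q ^ t + 1) = 1 :=
  Polynomial.mem_nthRootsFinset (by positivity) 1

private lemma mem_Sset {F : Type} [CommRing F] [IsDomain F] {q t : ℕ} {x : F} :
    x ∈ Sset F q t ↔
      x ∈ Aset F q t ∧ x ^ 2 ≠ 1 ∧ ∀ u, 1 ≤ u → u < t → x ∉ Aset F q u := by
  classical
  simp [Sset, Finset.mem_filter]

private lemma key_mem {F : Type} [CommRing F] [IsDomain F] {q s : ℕ} {x : F}
    (hs : 1 ≤ s) (hx2 : x ^ 2 ≠ 1) (hxA : x ∈ Aset F q s)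
    (hmin : ∀ u, 1 ≤ u → u < s → x ∉ Aset F q u) {t : ℕ} (ht : 1 ≤ t) :
    x ∈ Aset F q t ↔ s ∣ t ∧ Odd (t / s) := by
  have hd : ¬ orderOf x ∣ 2 := by rw [orderOf_dvd_iff_pow_eq_one]; exact hx2
  have hdu : ∀ u : ℕ, (x ∈ Aset F q u ↔ orderOf x ∣ q ^ u + 1) := fun u =>
    mem_Aset.trans orderOf_dvd_iff_pow_eq_one.symm
  rw [hdu]
  exact keyNT hd hs ((hdu s).mp hxA)
    (fun u hu1 hus hdvd => hmin u hu1 hus ((hdu u).mpr hdvd)) ht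

private lemma card_Aset {F : Type} [Field F] [IsAlgClosed F] {q t : ℕ}
    (hqF : (q : F) = 0) (ht : 1 ≤ t) : (Aset F q t).card = q ^ t + 1 := by
  haveI : NeZero ((q ^ t + 1 : ℕ) : F) :=
    ⟨by push_cast; rw [hqF, zero_pow (by omega), zero_add]; exact one_ne_zero⟩
  obtain ⟨ζ, hζ⟩ := HasEnoughRootsOfUnity.exists_primitiveRoot F (q ^ t + 1)
  exact hζ.card_nthRootsFinset

private lemma sum_cardS {F : Type} [Field F] [IsAlgClosed F] {q : ℕ}
    (hqodd : Odd q) (hqF : (q : F) = 0) (h2 : (1 : F) ≠ -1) {ρ : ℕ} (hρ : 1 ≤ ρ) :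
    ∑ s ∈ ρ.divisors.filter (fun s => Odd (ρ / s)), (Sset F q s).card = q ^ ρ - 1 := by
  classical
  have hpart : (Aset F q ρ).filter (fun x => x ^ 2 ≠ 1) =
      (ρ.divisors.filter (fun s => Odd (ρ / s))).biUnion (Sset F q) := by
    ext x
    simp only [Finset.mem_filter, Finset.mem_biUnion, Nat.mem_divisors]
    constructor
    · rintro ⟨hxA, hx2⟩
      have hex : ∃ t, 1 ≤ t ∧ x ∈ Aset F q t := ⟨ρ, hρ, hxA⟩
      obtain ⟨hs1, hxAs⟩ := Nat.find_spec hex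
      set s := Nat.find hex with hsdef
      have hminx : ∀ u, 1 ≤ u → u < s → x ∉ Aset F q u := fun u hu1 hus hxu =>
        Nat.find_min hex hus ⟨hu1, hxu⟩
      have hdr := (key_mem hs1 hx2 hxAs hminx hρ).mp hxA
      exact ⟨s, ⟨⟨hdr.1, by omega⟩, hdr.2⟩, mem_Sset.mpr ⟨hxAs, hx2, hminx⟩⟩
    · rintro ⟨s, ⟨⟨hsd, _⟩, hodd⟩, hxS⟩
      obtain ⟨hxAs, hx2, hminx⟩ := mem_Sset.mp hxS
      have hs1 : 1 ≤ s := Nat.pos_of_dvd_of_pos hsd (by omega)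
      exact ⟨(key_mem hs1 hx2 hxAs hminx hρ).mpr ⟨hsd, hodd⟩, hx2⟩
  have hdisj : ∀ s ∈ ρ.divisors.filter (fun s => Odd (ρ / s)),
      ∀ s' ∈ ρ.divisors.filter (fun s => Odd (ρ / s)), s ≠ s' →
        Disjoint (Sset F q s) (Sset F q s') := by
    have haux : ∀ s s' : ℕ, s ∈ ρ.divisors → s < s' → Disjoint (Sset F q s) (Sset F q s') := by
      intro s s' hs hlt
      rw [Finset.disjoint_left]
      intro x hx hx'
      obtain ⟨hxAs, _, _⟩ := mem_Sset.mp hx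
      obtain ⟨_, _, hminx'⟩ := mem_Sset.mp hx'
      exact hminx' s (Nat.pos_of_mem_divisors hs) hlt hxAs
    intro s hs s' hs' hne
    rcases Nat.lt_or_ge s s' with h | h
    · exact haux s s' (Finset.mem_of_mem_filter s hs) h
    · exact (haux s' s (Finset.mem_of_mem_filter s' hs') (by omega)).symm
  rw [← Finset.card_biUnion hdisj, ← hpart]
  -- now count the filter
  have hqpos : 0 < q := hqodd.pos
  have hsq : (Aset F q ρ).filter (fun x => ¬ x ^ 2 ≠ 1) = ({1, -1} : Finset F) := by
    ext x
    simp only [Finset.mem_filter, not_not, Finset.mem_insert, Finset.mem_singleton]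
    constructor
    · rintro ⟨_, hx⟩; exact sq_eq_one_iff.mp hx
    · have heven : Even (q ^ ρ + 1) := (hqodd.pow).add_one
      rintro (rfl | rfl)
      · exact ⟨mem_Aset.mpr (one_pow _), by rw [one_pow]⟩
      · exact ⟨mem_Aset.mpr (heven.neg_one_pow), by rw [neg_one_sq]⟩
  have hc2 : (({1, -1} : Finset F)).card = 2 := by
    rw [Finset.card_insert_of_notMem (by simpa using h2), Finset.card_singleton]
  have htot := Finset.card_filter_add_card_filter_not
    (s := Aset F q ρ) (p := fun x => x ^ 2 ≠ 1)
  rw [hsq, hc2, card_Aset hqF hρ] at htot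
  have hq1 : 1 ≤ q ^ ρ := Nat.one_le_pow _ _ hqpos
  omega

theorem stmt16 (K : Type) [Field K] [Fintype K] (hodd : Odd (Fintype.card K))
    (r : ℕ) (hr : 1 ≤ r) :
    (Nat.card {x : AlgebraicClosure K // x ≠ 0 ∧ x ^ 2 ≠ 1 ∧
        x ^ (Fintype.card K ^ r) = x⁻¹ ∧
        ∀ s : ℕ, 1 ≤ s → s < r → x ^ (Fintype.card K ^ s) ≠ x⁻¹} : ℤ)
      = ∑ s ∈ r.divisors.filter (fun s => Odd (r / s)),
          (ArithmeticFunction.moebius (r / s) : ℤ) * ((Fintype.card K : ℤ) ^ s - 1) := by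
  classical
  set Kb := AlgebraicClosure K with hKb
  set q := Fintype.card K with hqdef
  have hq1 : 1 < q := Fintype.one_lt_card
  have hqK : (q : K) = 0 := FiniteField.cast_card_eq_zero K
  have hqKb : (q : Kb) = 0 := by
    rw [← map_natCast (algebraMap K Kb) q, hqK, map_zero]
  have h2 : (1 : Kb) ≠ -1 := by
    intro h
    have h2z : ((2 : ℕ) : Kb) = 0 := by
      push_cast
      linear_combination h
    have h2K : ((2 : ℕ) : K) = 0 := by
      apply (algebraMap K Kb).injective
      rw [map_natCast, map_zero]; exact h2z
    haveI := ringChar.charP K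
    have hd2 : ringChar K ∣ 2 := (CharP.cast_eq_zero_iff K (ringChar K) 2).mp h2K
    have hdq : ringChar K ∣ q := (CharP.cast_eq_zero_iff K (ringChar K) q).mp hqK
    have hne1 : ringChar K ≠ 1 := CharP.ringChar_ne_one
    rcases (Nat.dvd_prime Nat.prime_two).mp hd2 with h1 | hch
    · exact hne1 h1
    · rw [hch] at hdq
      rw [Nat.odd_iff] at hodd
      omega
  -- translate the subtype into Sset
  have hsub : ∀ x : Kb, (x ≠ 0 ∧ x ^ 2 ≠ 1 ∧ x ^ (q ^ r) = x⁻¹ ∧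
      ∀ s : ℕ, 1 ≤ s → s < r → x ^ (q ^ s) ≠ x⁻¹) ↔ x ∈ Sset Kb q r := by
    intro x
    have hiff : x ≠ 0 → ∀ t : ℕ, (x ^ (q ^ t) = x⁻¹ ↔ x ∈ Aset Kb q t) := by
      intro hx0 t
      rw [mem_Aset]
      constructor
      · intro h; rw [pow_succ, h, inv_mul_cancel₀ hx0]
      · intro h; rw [pow_succ] at h; exact eq_inv_of_mul_eq_one_left h
    constructor
    · rintro ⟨hx0, hx2, hxr, hmin⟩
      exact mem_Sset.mpr ⟨(hiff hx0 r).mp hxr, hx2,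
        fun u hu1 hur hxu => hmin u hu1 hur ((hiff hx0 u).mpr hxu)⟩
    · intro hx
      obtain ⟨hxA, hx2, hmin⟩ := mem_Sset.mp hx
      have hx0 : x ≠ 0 := by
        intro h0
        rw [mem_Aset, h0, zero_pow (by positivity)] at hxA
        exact zero_ne_one hxA
      exact ⟨hx0, hx2, (hiff hx0 r).mpr hxA,
        fun u hu1 hur hxu => hmin u hu1 hur ((hiff hx0 u).mp hxu)⟩
  have hcard : Nat.card {x : Kb // x ≠ 0 ∧ x ^ 2 ≠ 1 ∧ x ^ (q ^ r) = x⁻¹ ∧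
      ∀ s : ℕ, 1 ≤ s → s < r → x ^ (q ^ s) ≠ x⁻¹} = (Sset Kb q r).card := by
    rw [Nat.card_congr (Equiv.subtypeEquivRight hsub)]
    exact Nat.card_eq_finsetCard _
  rw [hcard]
  -- decompose r = 2^a * m with m odd
  set a := (r.factorization) 2 with ha
  set m := r / 2 ^ a with hm
  have hr0 : r ≠ 0 := by omega
  have hram : 2 ^ a * m = r := by rw [hm, ha]; exact Nat.ordProj_mul_ordCompl_eq_self r 2
  have hm0 : 0 < m := by rw [hm, ha]; exact Nat.ordCompl_pos 2 hr0
  have h2m : ¬ 2 ∣ m := by rw [hm, ha]; exact Nat.not_dvd_ordCompl Nat.prime_two hr0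
  have hmodd : Odd m := Nat.odd_iff.mpr (by omega)
  -- Möbius inversion on the set of odd numbers
  have hdc : ∀ m' n : ℕ, m' ∣ n → n ∈ {n : ℕ | Odd n} → m' ∈ {n : ℕ | Odd n} := by
    intro m' n hdvd hn
    simp only [Set.mem_setOf_eq] at *
    rcases Nat.even_or_odd m' with he | ho
    · obtain ⟨c, rfl⟩ := hdvd
      exact absurd (he.mul_right c) (Nat.not_even_iff_odd.mpr hn)
    · exact ho
  have hinj : ∀ x ∈ m.divisors, ∀ y ∈ m.divisors,
      2 ^ a * x = 2 ^ a * y → x = y := by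
    intro x _ y _ hxy
    exact Nat.eq_of_mul_eq_mul_left (by positivity) hxy
  have hfg : ∀ n > 0, n ∈ {n : ℕ | Odd n} →
      ∑ i ∈ n.divisors, (fun i => ((Sset Kb q (2 ^ a * i)).card : ℤ)) i =
        (fun n => (q : ℤ) ^ (2 ^ a * n) - 1) n := by
    intro n hn hodd_n
    simp only [Set.mem_setOf_eq] at hodd_n
    have hpos : 1 ≤ 2 ^ a * n := Nat.one_le_iff_ne_zero.mpr (by positivity)
    have h1 := sum_cardS (F := Kb) hodd hqKb h2 (ρ := 2 ^ a * n) hpos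
    rw [Dodd hodd_n hn] at h1
    have hinj' : ∀ x ∈ n.divisors, ∀ y ∈ n.divisors,
        2 ^ a * x = 2 ^ a * y → x = y := by
      intro x _ y _ hxy
      exact Nat.eq_of_mul_eq_mul_left (by positivity) hxy
    rw [Finset.sum_image hinj'] at h1
    have hqp : 1 ≤ q ^ (2 ^ a * n) := Nat.one_le_pow _ _ (by omega)
    have hcast := congrArg (Nat.cast (R := ℤ)) h1
    push_cast [Nat.cast_sub hqp] at hcast
    simpa using hcast
  have hinv := (ArithmeticFunction.sum_eq_iff_sum_mul_moebius_eq_on (R := ℤ)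
      (f := fun i => ((Sset Kb q (2 ^ a * i)).card : ℤ))
      (g := fun n => (q : ℤ) ^ (2 ^ a * n) - 1)
      {n : ℕ | Odd n} hdc).mp hfg m hm0 hmodd
  have hinv2 : ∑ i ∈ m.divisors,
      (ArithmeticFunction.moebius (m / i) : ℤ) * ((q : ℤ) ^ (2 ^ a * i) - 1) =
      ((Sset Kb q (2 ^ a * m)).card : ℤ) := by
    rw [← hinv]
    exact (Nat.sum_divisorsAntidiagonal'
      (f := fun i j => (ArithmeticFunction.moebius i : ℤ) * ((q : ℤ) ^ (2 ^ a * j) - 1))).symm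
  rw [← hram, Dodd hmodd hm0, Finset.sum_image hinj, ← hinv2]
  apply Finset.sum_congr rfl
  intro t ht
  rw [Nat.mul_div_mul_left _ _ (by positivity : 0 < 2 ^ a)]
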